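/- Let n ≥ 3, r > 0 and τ ∈ ℝ. Let ω̃¹,…,ω̃^{n−1} ∈ ℝ^{n−1} be pairwise orthogonal vectors each of Euclidean norm r, and define ω̃ⁿ := (ω̃^{n−2} + ω̃^{n−1})/√2. For 1 ≤ k ≤ n set vᵏ := (1, −ω̃ᵏ, −τ) ∈ ℝ^{n+1} (the vector (1, −ωᵏ) where ωᵏ = (ω̃ᵏ, τ) ∈ ℝⁿ). Then the Gram determinant det[ (vⁱ·vʲ) ]_{1 ≤ i,j ≤ n} equals (1 + τ²)(√2 − 1)² r^{2(n−1)}. In particular it is strictly positive, so v¹,…,vⁿ are linearly independent. -/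

import Mathlib

open scoped RealInnerProductSpace

lemma gram_conj {ι : Type*} [Fintype ι] {F : Type*} [NormedAddCommGroup F]
    [InnerProductSpace ℝ F] (T : Matrix ι ι ℝ) (q u : ι → F)
    (hu : ∀ i, u i = ∑ j, T i j • q j) :
    (Matrix.of fun i j => (⟪u i, u j⟫ : ℝ))
      = T * (Matrix.of fun i j => (⟪q i, q j⟫ : ℝ)) * T.transpose := by
  ext i j
  simp only [Matrix.mul_apply, Matrix.of_apply, Matrix.transpose_apply, hu,
    sum_inner, inner_sum, real_inner_smul_left, real_inner_smul_right,
    Finset.sum_mul, Finset.mul_sum]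
  refine Finset.sum_congr rfl fun k _ => Finset.sum_congr rfl fun l _ => ?_
  rw [real_inner_comm]
  ring

set_option maxHeartbeats 1000000 in
theorem gram_determinant_null_vectors
    (n : ℕ) (hn : 3 ≤ n) (r : ℝ) (hr : 0 < r) (τ : ℝ)
    (w : Fin (n - 1) → EuclideanSpace ℝ (Fin (n - 1)))
    (horth : ∀ i j, i ≠ j → ⟪w i, w j⟫ = 0)
    (hnorm : ∀ i, ‖w i‖ = r) :
    let W : Fin n → EuclideanSpace ℝ (Fin (n - 1)) := fun k =>
      if h : (k : ℕ) < n - 1 then w ⟨k, h⟩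
      else (Real.sqrt 2)⁻¹ • (w ⟨n - 3, by omega⟩ + w ⟨n - 2, by omega⟩)
    Matrix.det (Matrix.of fun i j : Fin n => 1 + τ ^ 2 + ⟪W i, W j⟫)
        = (1 + τ ^ 2) * (Real.sqrt 2 - 1) ^ 2 * r ^ (2 * (n - 1)) ∧
      LinearIndependent ℝ
        (fun k : Fin n =>
          ((1 : ℝ), -W k, -τ) : Fin n → ℝ × EuclideanSpace ℝ (Fin (n - 1)) × ℝ) := by
  intro W
  have hW : W = fun k : Fin n =>
      if h : (k : ℕ) < n - 1 then w ⟨k, h⟩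
      else (Real.sqrt 2)⁻¹ • (w ⟨n - 3, by omega⟩ + w ⟨n - 2, by omega⟩) := rfl
  -- basic constants
  have hsqrt2 : Real.sqrt 2 * Real.sqrt 2 = 2 := Real.mul_self_sqrt (by norm_num)
  have hsqrt2pos : (0:ℝ) < Real.sqrt 2 := Real.sqrt_pos.mpr (by norm_num)
  have hone_lt : (1:ℝ) < Real.sqrt 2 := by nlinarith
  set α : ℝ := 1 - Real.sqrt 2 with hαdef
  have hα : α ≠ 0 := by rw [hαdef]; intro h; nlinarith
  set c : ℝ := Real.sqrt (1 + τ ^ 2) with hcdef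
  have hc : c * c = 1 + τ ^ 2 := Real.mul_self_sqrt (by positivity)
  -- special indices
  have h3 : n - 3 < n := by omega
  have h2 : n - 2 < n := by omega
  have h1 : n - 1 < n := by omega
  set K : Fin n := ⟨n - 3, h3⟩ with hKdef
  set K' : Fin n := ⟨n - 2, h2⟩ with hK'def
  set L : Fin n := ⟨n - 1, h1⟩ with hLdef
  have hKL : K ≠ L := Fin.ne_of_val_ne (show n - 3 ≠ n - 1 by omega)
  have hK'L : K' ≠ L := Fin.ne_of_val_ne (show n - 2 ≠ n - 1 by omega)
  have hKK' : K ≠ K' := Fin.ne_of_val_ne (show n - 3 ≠ n - 2 by omega)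
  set k3 : Fin (n - 1) := ⟨n - 3, by omega⟩ with hk3def
  set k2 : Fin (n - 1) := ⟨n - 2, by omega⟩ with hk2def
  have hLval : (L : ℕ) = n - 1 := rfl
  have hnotL : ∀ k : Fin n, (k : ℕ) < n - 1 → k ≠ L :=
    fun k h hh => by rw [hh] at h; omega
  have hcases : ∀ k : Fin n, (k : ℕ) < n - 1 ∨ k = L := by
    intro k
    by_cases h : (k : ℕ) < n - 1
    · exact Or.inl h
    · exact Or.inr (Fin.ext (show (k : ℕ) = n - 1 by omega))
  -- inner products of the w's
  have hww : ∀ a b : Fin (n - 1), (⟪w a, w b⟫ : ℝ) = if a = b then r ^ 2 else 0 := by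
    intro a b
    by_cases h : a = b
    · subst h
      rw [if_pos rfl, real_inner_self_eq_norm_sq, hnorm]
    · rw [if_neg h]; exact horth a b h
  -- values of W
  have hWlt : ∀ (k : Fin n) (h : (k : ℕ) < n - 1), W k = w ⟨k, h⟩ := by
    intro k h; rw [hW]; exact dif_pos h
  have hWK : W K = w k3 := hWlt K (by omega)
  have hWK' : W K' = w k2 := hWlt K' (by omega)
  have hWL : W L = (Real.sqrt 2)⁻¹ • (w k3 + w k2) := by
    rw [hW]; exact dif_neg (by omega)
  -- triangular matrices
  set T1 : Matrix (Fin n) (Fin n) ℝ := Matrix.of fun i j =>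
    if i = j then 1 else if i = L ∧ (j = K ∨ j = K') then -(Real.sqrt 2)⁻¹ else 0 with hT1def
  set T2 : Matrix (Fin n) (Fin n) ℝ := Matrix.of fun i j =>
    if i = j then 1 else if j = L then -α⁻¹ else 0 with hT2def
  have hT1diag : ∀ i, T1 i i = 1 := fun i => if_pos rfl
  have hT2diag : ∀ i, T2 i i = 1 := fun i => if_pos rfl
  -- row descriptions
  have hLK : L ≠ K := Ne.symm hKL
  have hLK' : L ≠ K' := Ne.symm hK'L
  have hK'K : K' ≠ K := Ne.symm hKK'
  have hT1L : ∀ j, T1 L j = (if j = L then 1 else 0) +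
      ((if j = K then -(Real.sqrt 2)⁻¹ else 0) + (if j = K' then -(Real.sqrt 2)⁻¹ else 0)) := by
    intro j
    clear hW hWlt hWK hWK' hWL hww hnorm horth hcases hnotL hc hcdef
    rw [hT1def]
    simp only [Matrix.of_apply]
    by_cases hjL : j = L <;> by_cases hjK : j = K <;> by_cases hjK' : j = K' <;>
      subst_eqs <;> simp_all [eq_comm] <;> ring
  have hT1ne : ∀ i, i ≠ L → ∀ j, T1 i j = if j = i then 1 else 0 := by
    intro i hi j
    clear hW hWlt hWK hWK' hWL hww hnorm horth hcases hnotL hc hcdef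
    rw [hT1def]
    simp only [Matrix.of_apply]
    by_cases hji : j = i <;> subst_eqs <;> simp_all [eq_comm]
  have hT2L : ∀ j, T2 L j = if j = L then 1 else 0 := by
    intro j
    clear hW hWlt hWK hWK' hWL hww hnorm horth hcases hnotL hc hcdef
    rw [hT2def]
    simp only [Matrix.of_apply]
    by_cases hjL : j = L <;> subst_eqs <;> simp_all [eq_comm]
  have hT2ne : ∀ i, i ≠ L → ∀ j, T2 i j = (if j = i then 1 else 0) +
      (if j = L then -α⁻¹ else 0) := by
    intro i hi j
    clear hW hWlt hWK hWK' hWL hww hnorm horth hcases hnotL hc hcdef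
    rw [hT2def]
    simp only [Matrix.of_apply]
    by_cases hji : j = i <;> by_cases hjL : j = L <;>
      subst_eqs <;> simp_all [eq_comm] <;> ring
  -- determinants of the triangular matrices
  have hdetT1 : T1.det = 1 := by
    rw [Matrix.det_of_lowerTriangular T1 ?_]
    · simp [hT1diag]
    · intro i j hij
      rw [OrderDual.toDual_lt_toDual] at hij
      have hij' : (i : ℕ) < (j : ℕ) := hij
      have hiL : i ≠ L := fun h => by rw [h, hLval] at hij'; omega
      rw [hT1ne i hiL, if_neg (fun h => absurd (congrArg Fin.val h) (by omega))]
  have hdetT2 : T2.det = 1 := by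
    rw [Matrix.det_of_upperTriangular (M := T2) ?_]
    · simp [hT2diag]
    · intro i j hij
      have hij' : (j : ℕ) < (i : ℕ) := hij
      have hjL : j ≠ L := fun h => by
        rw [h, hLval] at hij'
        have := i.isLt
        omega
      rw [hT2def]
      simp only [Matrix.of_apply]
      rw [if_neg (fun h => absurd (congrArg Fin.val h) (by omega)), if_neg hjL]
  -- the Gram factorization space
  set le : WithLp 2 (EuclideanSpace ℝ (Fin (n - 1)) × ℝ) ≃ₗ[ℝ]
      EuclideanSpace ℝ (Fin (n - 1)) × ℝ :=
    WithLp.linearEquiv 2 ℝ (EuclideanSpace ℝ (Fin (n - 1)) × ℝ) with hledef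
  have hip : ∀ (x y : EuclideanSpace ℝ (Fin (n - 1))) (a b : ℝ),
      (⟪le.symm (x, a), le.symm (y, b)⟫ : ℝ) = ⟪x, y⟫ + a * b := by
    intro x y a b
    simp [hledef, WithLp.prod_inner_apply, RCLike.inner_apply]
    ring
  set q : Fin n → WithLp 2 (EuclideanSpace ℝ (Fin (n - 1)) × ℝ) :=
    fun k => le.symm (W k, c) with hqdef
  set M : Matrix (Fin n) (Fin n) ℝ :=
    Matrix.of fun i j : Fin n => 1 + τ ^ 2 + ⟪W i, W j⟫ with hMdef
  have hMq : M = Matrix.of fun i j => (⟪q i, q j⟫ : ℝ) := by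
    ext i j
    rw [hMdef, Matrix.of_apply, Matrix.of_apply, hqdef]
    simp only
    rw [hip, hc]
    ring
  -- the vector families u and p
  set u : Fin n → WithLp 2 (EuclideanSpace ℝ (Fin (n - 1)) × ℝ) := fun k =>
    if k = L then q L - (Real.sqrt 2)⁻¹ • (q K + q K') else q k with hudef
  set p : Fin n → WithLp 2 (EuclideanSpace ℝ (Fin (n - 1)) × ℝ) := fun k =>
    if k = L then u L else u k - α⁻¹ • u L with hpdef
  have huL : u L = q L - (Real.sqrt 2)⁻¹ • (q K + q K') := by
    rw [hudef]; exact if_pos rfl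
  have hune : ∀ k, k ≠ L → u k = q k := by
    intro k h; rw [hudef]; exact if_neg h
  have hpL : p L = u L := by rw [hpdef]; exact if_pos rfl
  have hpne : ∀ k, k ≠ L → p k = u k - α⁻¹ • u L := by
    intro k h; rw [hpdef]; exact if_neg h
  have hu : ∀ i, u i = ∑ j, T1 i j • q j := by
    intro i
    by_cases hi : i = L
    · subst hi
      have hterm : ∀ j : Fin n, T1 L j • q j = (if j = L then q j else 0) +
          ((if j = K then -(Real.sqrt 2)⁻¹ • q j else 0) +
            (if j = K' then -(Real.sqrt 2)⁻¹ • q j else 0)) := by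
        intro j
        rw [hT1L j]
        simp only [add_smul, ite_smul, zero_smul, one_smul]
      rw [Finset.sum_congr rfl fun j _ => hterm j]
      rw [Finset.sum_add_distrib, Finset.sum_add_distrib,
        Finset.sum_ite_eq' Finset.univ L (fun j => q j),
        Finset.sum_ite_eq' Finset.univ K (fun j => -(Real.sqrt 2)⁻¹ • q j),
        Finset.sum_ite_eq' Finset.univ K' (fun j => -(Real.sqrt 2)⁻¹ • q j)]
      simp only [Finset.mem_univ, ite_true]
      rw [huL, neg_smul, neg_smul, smul_add]
      abel
    · have hterm : ∀ j : Fin n, T1 i j • q j = if j = i then q j else 0 := by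
        intro j
        rw [hT1ne i hi j]
        simp only [ite_smul, zero_smul, one_smul]
      rw [Finset.sum_congr rfl fun j _ => hterm j]
      rw [Finset.sum_ite_eq' Finset.univ i (fun j => q j)]
      simp only [Finset.mem_univ, ite_true]
      exact hune i hi
  have hp : ∀ i, p i = ∑ j, T2 i j • u j := by
    intro i
    by_cases hi : i = L
    · subst hi
      have hterm : ∀ j : Fin n, T2 L j • u j = if j = L then u j else 0 := by
        intro j
        rw [hT2L j]
        simp only [ite_smul, zero_smul, one_smul]
      rw [Finset.sum_congr rfl fun j _ => hterm j]
      rw [Finset.sum_ite_eq' Finset.univ L (fun j => u j)]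
      simp only [Finset.mem_univ, ite_true]
      exact hpL
    · have hterm : ∀ j : Fin n, T2 i j • u j = (if j = i then u j else 0) +
          (if j = L then -α⁻¹ • u j else 0) := by
        intro j
        rw [hT2ne i hi j]
        simp only [add_smul, ite_smul, zero_smul, one_smul]
      rw [Finset.sum_congr rfl fun j _ => hterm j]
      rw [Finset.sum_add_distrib,
        Finset.sum_ite_eq' Finset.univ i (fun j => u j),
        Finset.sum_ite_eq' Finset.univ L (fun j => -α⁻¹ • u j)]
      simp only [Finset.mem_univ, ite_true]
      rw [hpne i hi, neg_smul]
      abel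
  -- explicit values of p
  have hpLval : p L = le.symm (0, α * c) := by
    rw [hpL, huL, hqdef]
    simp only
    rw [← map_add, ← map_smul, ← map_sub]
    congr 1
    rw [hWL, hWK, hWK', Prod.mk_add_mk, Prod.smul_mk, Prod.mk_sub_mk]
    refine Prod.ext (sub_self _) ?_
    show c - (Real.sqrt 2)⁻¹ * (c + c) = α * c
    have h2c : (Real.sqrt 2)⁻¹ * 2 = Real.sqrt 2 := by
      rw [inv_mul_eq_div, div_eq_iff (ne_of_gt hsqrt2pos)]
      linarith [hsqrt2]
    calc c - (Real.sqrt 2)⁻¹ * (c + c) = c - ((Real.sqrt 2)⁻¹ * 2) * c := by ring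
      _ = c - Real.sqrt 2 * c := by rw [h2c]
      _ = α * c := by rw [hαdef]; ring
  have hplt : ∀ (k : Fin n) (h : (k : ℕ) < n - 1), p k = le.symm (w ⟨k, h⟩, 0) := by
    intro k h
    have hkL : k ≠ L := hnotL k h
    have huLv : u L = le.symm (0, α * c) := by rw [← hpL]; exact hpLval
    rw [hpne k hkL, hune k hkL, huLv, hqdef]
    simp only
    rw [hWlt k h, ← map_smul, ← map_sub]
    congr 1
    rw [Prod.smul_mk, Prod.mk_sub_mk]
    refine Prod.ext (by simp) ?_
    show c - α⁻¹ * (α * c) = 0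
    field_simp
    ring
  -- Gram matrix of p is diagonal
  set d : Fin n → ℝ := fun k =>
    if (k : ℕ) < n - 1 then r ^ 2 else α ^ 2 * (1 + τ ^ 2) with hddef
  have hdlt : ∀ k : Fin n, (k : ℕ) < n - 1 → d k = r ^ 2 := by
    intro k h; rw [hddef]; simp only [if_pos h]
  have hdL : d L = α ^ 2 * (1 + τ ^ 2) := by
    rw [hddef]
    simp only [hLval]
    rw [if_neg (by omega)]
  have hGp : (Matrix.of fun i j => (⟪p i, p j⟫ : ℝ)) = Matrix.diagonal d := by
    ext i j
    rw [Matrix.of_apply, Matrix.diagonal_apply]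
    rcases hcases i with hi | hi <;> rcases hcases j with hj | hj
    · rw [hplt i hi, hplt j hj, hip, hww]
      have hij : ((⟨(i:ℕ), hi⟩ : Fin (n-1)) = ⟨(j:ℕ), hj⟩) ↔ i = j := by
        simp [Fin.ext_iff]
      by_cases hij' : i = j
      · rw [if_pos (hij.mpr hij'), if_pos hij', hdlt i hi]
        ring
      · rw [if_neg (fun hh => hij' (hij.mp hh)), if_neg hij']
        ring
    · subst hj
      rw [hplt i hi, hpLval, hip, if_neg (hnotL i hi)]
      simp
    · subst hi
      rw [hpLval, hplt j hj, hip, if_neg (fun hh => (hnotL j hj) hh.symm)]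
      simp
    · subst hi; subst hj
      rw [hpLval, hip, if_pos rfl, hdL]
      rw [inner_zero_left]
      nlinarith [hc]
  -- determinant computation
  have hdetval : M.det = (1 + τ ^ 2) * (Real.sqrt 2 - 1) ^ 2 * r ^ (2 * (n - 1)) := by
    have hGu := gram_conj T1 q u hu
    have hGp2 := gram_conj T2 u p hp
    have hdetp : (Matrix.of fun i j => (⟪p i, p j⟫ : ℝ)).det = M.det := by
      rw [hGp2, hGu, ← hMq]
      rw [Matrix.det_mul, Matrix.det_mul, Matrix.det_mul, Matrix.det_mul,
        Matrix.det_transpose, Matrix.det_transpose, hdetT1, hdetT2]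
      ring
    rw [hGp, Matrix.det_diagonal] at hdetp
    rw [← hdetp]
    have hprod : ∏ k, d k = α ^ 2 * (1 + τ ^ 2) * r ^ (2 * (n - 1)) := by
      rw [← Finset.mul_prod_erase Finset.univ d (Finset.mem_univ L)]
      have hrest : ∏ k ∈ Finset.univ.erase L, d k = r ^ (2 * (n - 1)) := by
        rw [Finset.prod_congr rfl (fun k hk =>
          hdlt k ((hcases k).resolve_right (Finset.mem_erase.mp hk).1)),
          Finset.prod_const, Finset.card_erase_of_mem (Finset.mem_univ L),
          Finset.card_univ, Fintype.card_fin, ← pow_mul]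
      rw [hdL, hrest]
    rw [hprod, hαdef]
    ring
  refine ⟨hdetval, ?_⟩
  -- linear independence
  have hdetne : M.det ≠ 0 := by
    rw [hdetval]
    have hp1 : (0:ℝ) < 1 + τ ^ 2 := by positivity
    have hp2 : (0:ℝ) < (Real.sqrt 2 - 1) ^ 2 := by
      apply pow_pos; linarith
    have hp3 : (0:ℝ) < r ^ (2 * (n - 1)) := pow_pos hr _
    exact ne_of_gt (by positivity)
  rw [Fintype.linearIndependent_iff]
  intro g hg
  have hg1 : ∑ k, g k = 0 := by
    have := congrArg Prod.fst hg
    simpa [Prod.fst_sum] using this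
  have hg2 : ∑ k, g k • W k = 0 := by
    have h' := congrArg (fun x : ℝ × EuclideanSpace ℝ (Fin (n - 1)) × ℝ => x.2.1) hg
    simp only [Prod.fst_sum, Prod.snd_sum] at h'
    simp only [Prod.smul_mk, smul_neg, Prod.mk.injEq] at h'
    have h2' : ∑ k, -(g k • W k) = 0 := by simpa using h'
    rw [Finset.sum_neg_distrib, neg_eq_zero] at h2'
    exact h2'
  have hmv : M.mulVec g = 0 := by
    funext j
    simp only [Matrix.mulVec, dotProduct, Pi.zero_apply, hMdef, Matrix.of_apply]
    have hsplit : ∀ k, (1 + τ ^ 2 + ⟪W j, W k⟫) * g k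
        = (1 + τ ^ 2) * g k + ⟪W j, g k • W k⟫ := by
      intro k
      rw [real_inner_smul_right]
      ring
    rw [Finset.sum_congr rfl fun k _ => hsplit k, Finset.sum_add_distrib,
      ← Finset.mul_sum, hg1, mul_zero, zero_add, ← inner_sum, hg2, inner_zero_right]
  have hg0 := Matrix.eq_zero_of_mulVec_eq_zero hdetne hmv
  intro i
  exact congrFun hg0 i
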